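/- Let B ∈ R^{n×r}, b ∈ R^n, and let Ũ be the orthonormal polar factor of the augmented matrix [B b] ∈ R^{n×(r+1)}, assumed full column rank. Let S ∈ R^{s×n} be such that SŨ has full column rank. If c minimizes ‖Bc − b‖₂ and ĉ minimizes ‖S(Bx − b)‖₂, then ‖Bĉ − b‖₂ ≤ κ₂(SŨ) · ‖Bc − b‖₂, where κ₂(SŨ) = σ_max(SŨ)/σ_min(SŨ). -/

import Mathlib

open Matrix
open scoped Matrix.Norms.L2Operator

/-- Euclidean norm of a vector in `Fin n → ℝ`. -/
noncomputable def enorm2 {n : ℕ} (v : Fin n → ℝ) : ℝ :=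
  ‖(WithLp.equiv 2 (Fin n → ℝ)).symm v‖

/-- Smallest singular value: infimum of `‖M x‖₂` over unit vectors `x`. -/
noncomputable def sigmaMin {m r : ℕ} (M : Matrix (Fin m) (Fin r) ℝ) : ℝ :=
  sInf {t | ∃ x : Fin r → ℝ, enorm2 x = 1 ∧ t = enorm2 (M.mulVec x)}

/-- Largest singular value: supremum of `‖M x‖₂` over unit vectors `x`. -/
noncomputable def sigmaMax {m r : ℕ} (M : Matrix (Fin m) (Fin r) ℝ) : ℝ :=
  sSup {t | ∃ x : Fin r → ℝ, enorm2 x = 1 ∧ t = enorm2 (M.mulVec x)}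

/-- Moore–Penrose pseudoinverse of a full-column-rank matrix. -/
noncomputable def pinv {m r : ℕ} (M : Matrix (Fin m) (Fin r) ℝ) :
    Matrix (Fin r) (Fin m) ℝ :=
  (Mᵀ * M)⁻¹ * Mᵀ

/-- `S` is a row-subsampling matrix: a row-submatrix of the identity. -/
def IsSubsampling {s n : ℕ} (S : Matrix (Fin s) (Fin n) ℝ) : Prop :=
  ∃ f : Fin s → Fin n, Function.Injective f ∧ ∀ i j, S i j = if j = f i then 1 else 0


lemma enorm2_nonneg {n : ℕ} (v : Fin n → ℝ) : 0 ≤ enorm2 v := norm_nonneg _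

lemma enorm2_eq_zero {n : ℕ} {v : Fin n → ℝ} : enorm2 v = 0 ↔ v = 0 := by
  unfold enorm2
  rw [norm_eq_zero]
  exact ⟨fun h => by simpa using congrArg (WithLp.equiv 2 (Fin n → ℝ)) h,
    fun h => by simp [h]⟩

lemma enorm2_smul {n : ℕ} (a : ℝ) (v : Fin n → ℝ) : enorm2 (a • v) = |a| * enorm2 v := by
  unfold enorm2
  rw [show (WithLp.equiv 2 (Fin n → ℝ)).symm (a • v) = a • (WithLp.equiv 2 (Fin n → ℝ)).symm v from rfl, norm_smul, Real.norm_eq_abs]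

lemma enorm2_sq {n : ℕ} (v : Fin n → ℝ) : enorm2 v ^ 2 = v ⬝ᵥ v := by
  unfold enorm2
  rw [EuclideanSpace.norm_eq]
  rw [Real.sq_sqrt (by positivity)]
  simp [dotProduct, Real.norm_eq_abs, sq_abs, sq]

lemma enorm2_mulVec_orth {n k : ℕ} {U : Matrix (Fin n) (Fin k) ℝ}
    (hU : Uᵀ * U = 1) (y : Fin k → ℝ) : enorm2 (U.mulVec y) = enorm2 y := by
  have h2 : enorm2 (U.mulVec y) ^ 2 = enorm2 y ^ 2 := by
    rw [enorm2_sq, enorm2_sq]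
    calc U.mulVec y ⬝ᵥ U.mulVec y = (U.mulVec y ᵥ* U) ⬝ᵥ y := by
          rw [Matrix.dotProduct_mulVec]
      _ = (Uᵀ.mulVec (U.mulVec y)) ⬝ᵥ y := by rw [Matrix.mulVec_transpose]
      _ = ((Uᵀ * U).mulVec y) ⬝ᵥ y := by rw [Matrix.mulVec_mulVec]
      _ = y ⬝ᵥ y := by rw [hU, Matrix.one_mulVec]
  have hfac : (enorm2 (U.mulVec y) - enorm2 y) * (enorm2 (U.mulVec y) + enorm2 y) = 0 := by
    nlinarith [h2]
  rcases mul_eq_zero.mp hfac with h | h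
  · linarith
  · have h1 := enorm2_nonneg (U.mulVec y)
    have h2' := enorm2_nonneg y
    linarith

lemma le_opNorm_enorm2 {m k : ℕ} (M : Matrix (Fin m) (Fin k) ℝ) (x : Fin k → ℝ) :
    enorm2 (M.mulVec x) ≤ ‖M‖ * enorm2 x := by
  have := M.l2_opNorm_mulVec ((WithLp.equiv 2 (Fin k → ℝ)).symm x)
  simpa [enorm2] using this

lemma bddAbove_set {m k : ℕ} (M : Matrix (Fin m) (Fin k) ℝ) :
    BddAbove {t | ∃ x : Fin k → ℝ, enorm2 x = 1 ∧ t = enorm2 (M.mulVec x)} := by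
  refine ⟨‖M‖, fun t ht => ?_⟩
  obtain ⟨x, hx, rfl⟩ := ht
  calc enorm2 (M.mulVec x) ≤ ‖M‖ * enorm2 x := le_opNorm_enorm2 M x
    _ = ‖M‖ := by rw [hx, mul_one]

lemma mulVec_le_sigmaMax {m k : ℕ} (M : Matrix (Fin m) (Fin k) ℝ) (x : Fin k → ℝ) :
    enorm2 (M.mulVec x) ≤ sigmaMax M * enorm2 x := by
  by_cases hx : x = 0
  · simp [hx, Matrix.mulVec_zero, enorm2_eq_zero.mpr rfl]
  · have ht : 0 < enorm2 x := lt_of_le_of_ne (enorm2_nonneg x)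
      (fun h => hx (enorm2_eq_zero.mp h.symm))
    set t := enorm2 x with htdef
    have hu : enorm2 (t⁻¹ • x) = 1 := by
      rw [enorm2_smul, abs_of_pos (inv_pos.mpr ht), inv_mul_cancel₀ ht.ne']
    have hmem : enorm2 (M.mulVec (t⁻¹ • x)) ∈
        {t | ∃ x : Fin k → ℝ, enorm2 x = 1 ∧ t = enorm2 (M.mulVec x)} := ⟨_, hu, rfl⟩
    have hle : enorm2 (M.mulVec (t⁻¹ • x)) ≤ sigmaMax M := le_csSup (bddAbove_set M) hmem
    have heq : enorm2 (M.mulVec (t⁻¹ • x)) = t⁻¹ * enorm2 (M.mulVec x) := by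
      rw [Matrix.mulVec_smul, enorm2_smul, abs_of_pos (inv_pos.mpr ht)]
    rw [heq] at hle
    calc enorm2 (M.mulVec x) = t * (t⁻¹ * enorm2 (M.mulVec x)) := by
          field_simp
      _ ≤ t * sigmaMax M := by
          exact mul_le_mul_of_nonneg_left hle ht.le
      _ = sigmaMax M * t := mul_comm _ _

lemma sigmaMin_mul_le_mulVec {m k : ℕ} (M : Matrix (Fin m) (Fin k) ℝ) (x : Fin k → ℝ) :
    sigmaMin M * enorm2 x ≤ enorm2 (M.mulVec x) := by
  by_cases hx : x = 0
  · simp [hx, Matrix.mulVec_zero, enorm2_eq_zero.mpr rfl]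
  · have ht : 0 < enorm2 x := lt_of_le_of_ne (enorm2_nonneg x)
      (fun h => hx (enorm2_eq_zero.mp h.symm))
    set t := enorm2 x with htdef
    have hu : enorm2 (t⁻¹ • x) = 1 := by
      rw [enorm2_smul, abs_of_pos (inv_pos.mpr ht), inv_mul_cancel₀ ht.ne']
    have hmem : enorm2 (M.mulVec (t⁻¹ • x)) ∈
        {t | ∃ x : Fin k → ℝ, enorm2 x = 1 ∧ t = enorm2 (M.mulVec x)} := ⟨_, hu, rfl⟩
    have hbdd : BddBelow {t | ∃ x : Fin k → ℝ, enorm2 x = 1 ∧ t = enorm2 (M.mulVec x)} :=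
      ⟨0, fun t ht => by obtain ⟨x, _, rfl⟩ := ht; exact enorm2_nonneg _⟩
    have hle : sigmaMin M ≤ enorm2 (M.mulVec (t⁻¹ • x)) := csInf_le hbdd hmem
    have heq : enorm2 (M.mulVec (t⁻¹ • x)) = t⁻¹ * enorm2 (M.mulVec x) := by
      rw [Matrix.mulVec_smul, enorm2_smul, abs_of_pos (inv_pos.mpr ht)]
    rw [heq] at hle
    calc sigmaMin M * t ≤ (t⁻¹ * enorm2 (M.mulVec x)) * t :=
          mul_le_mul_of_nonneg_right hle ht.le
      _ = enorm2 (M.mulVec x) := by field_simp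

lemma mulVec_injective_of_rank {m k : ℕ} {M : Matrix (Fin m) (Fin k) ℝ}
    (h : M.rank = k) : ∀ v : Fin k → ℝ, M.mulVec v = 0 → v = 0 := by
  have hrn := M.mulVecLin.finrank_range_add_finrank_ker
  rw [show Module.finrank ℝ (LinearMap.range M.mulVecLin) = M.rank from rfl, h,
    Module.finrank_fin_fun] at hrn
  have hker : Module.finrank ℝ (LinearMap.ker M.mulVecLin) = 0 := by omega
  have : LinearMap.ker M.mulVecLin = ⊥ :=
    Submodule.finrank_eq_zero.mp hker
  intro v hv
  have := Matrix.ker_mulVecLin_eq_bot_iff.mp this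
  exact this v hv

lemma sigmaMin_pos {m k : ℕ} {M : Matrix (Fin m) (Fin k) ℝ} (hk : 0 < k)
    (h : M.rank = k) : 0 < sigmaMin M := by
  have hinj := mulVec_injective_of_rank h
  -- the function on EuclideanSpace
  set g : EuclideanSpace ℝ (Fin k) → ℝ :=
    fun y => enorm2 (M.mulVec ((WithLp.equiv 2 (Fin k → ℝ)) y)) with hg
  have hgc : Continuous g := by
    have : g = fun y => ‖Matrix.toEuclideanLin M y‖ := by
      funext y; rw [hg]; rfl
    rw [this]
    exact (LinearMap.continuous_of_finiteDimensional _).norm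
  have hsph : IsCompact (Metric.sphere (0 : EuclideanSpace ℝ (Fin k)) 1) :=
    isCompact_sphere 0 1
  haveI : Nonempty (Fin k) := ⟨⟨0, hk⟩⟩
  have hne : (Metric.sphere (0 : EuclideanSpace ℝ (Fin k)) 1).Nonempty :=
    NormedSpace.sphere_nonempty.mpr zero_le_one
  obtain ⟨y0, hy0, hy0min⟩ := hsph.exists_isMinOn hne hgc.continuousOn
  have hy0norm : enorm2 ((WithLp.equiv 2 (Fin k → ℝ)) y0) = 1 := by
    have : ‖y0‖ = 1 := by simpa using hy0
    simpa [enorm2] using this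
  have hy0pos : 0 < g y0 := by
    have hne0 : ((WithLp.equiv 2 (Fin k → ℝ)) y0 : Fin k → ℝ) ≠ 0 := by
      intro hz
      rw [hz, enorm2_eq_zero.mpr rfl] at hy0norm
      norm_num at hy0norm
    have hMne : M.mulVec ((WithLp.equiv 2 (Fin k → ℝ)) y0) ≠ 0 :=
      fun h => hne0 (hinj _ h)
    exact lt_of_le_of_ne (enorm2_nonneg _) (fun h => hMne (enorm2_eq_zero.mp h.symm))
  refine lt_of_lt_of_le hy0pos (le_csInf ?_ ?_)
  · exact ⟨_, _, hy0norm, rfl⟩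
  · rintro t ⟨x, hx, rfl⟩
    have hxmem : (WithLp.equiv 2 (Fin k → ℝ)).symm x ∈
        Metric.sphere (0 : EuclideanSpace ℝ (Fin k)) 1 := by
      simp only [Metric.mem_sphere, dist_zero_right]
      exact hx
    have := hy0min hxmem
    simpa [hg] using this

/-- residual bound via the condition number of the sketched
augmented orthonormal factor. -/
theorem stmt2 {n r s : ℕ} (hnr : r < n) (hrs : r + 1 ≤ s) (hsn : s ≤ n)
    (B : Matrix (Fin n) (Fin r) ℝ) (b : Fin n → ℝ)
    (Bb : Matrix (Fin n) (Fin (r + 1)) ℝ)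
    (hBb : Bb = Matrix.of fun i (j : Fin (r + 1)) =>
      if h : (j : ℕ) < r then B i ⟨j, h⟩ else b i)
    (Ut : Matrix (Fin n) (Fin (r + 1)) ℝ) (Ht : Matrix (Fin (r + 1)) (Fin (r + 1)) ℝ)
    (hpolar : Bb = Ut * Ht) (hUt : Utᵀ * Ut = 1) (hHt : Ht.PosDef)
    (hBbrank : Bb.rank = r + 1)
    (S : Matrix (Fin s) (Fin n) ℝ) (hSU : (S * Ut).rank = r + 1)
    (c chat : Fin r → ℝ)
    (hc : ∀ v : Fin r → ℝ, enorm2 (B.mulVec c - b) ≤ enorm2 (B.mulVec v - b))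
    (hchat : ∀ v : Fin r → ℝ,
      enorm2 (S.mulVec (B.mulVec chat - b)) ≤ enorm2 (S.mulVec (B.mulVec v - b))) :
    enorm2 (B.mulVec chat - b) ≤
      (sigmaMax (S * Ut) / sigmaMin (S * Ut)) * enorm2 (B.mulVec c - b) := by
  -- key representation
  have key : ∀ v : Fin r → ℝ, B.mulVec v - b = Bb.mulVec (Fin.snoc v (-1)) := by
    intro v
    funext i
    rw [hBb]
    simp only [Pi.sub_apply, Matrix.mulVec, dotProduct, Matrix.of_apply]
    rw [Fin.sum_univ_castSucc]
    simp only [Fin.snoc_castSucc, Fin.snoc_last, Fin.coe_castSucc, Fin.is_lt, dif_pos,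
      Fin.val_last, lt_irrefl, dif_neg, Fin.eta]
    ring_nf
    congr 1
  set y : (Fin r → ℝ) → (Fin (r+1) → ℝ) := fun v => Ht.mulVec (Fin.snoc v (-1)) with hy
  have key2 : ∀ v : Fin r → ℝ, B.mulVec v - b = Ut.mulVec (y v) := by
    intro v
    rw [key v, hpolar, hy]
    rw [← Matrix.mulVec_mulVec]
  have keynorm : ∀ v : Fin r → ℝ, enorm2 (B.mulVec v - b) = enorm2 (y v) := by
    intro v; rw [key2 v, enorm2_mulVec_orth hUt]
  have keyS : ∀ v : Fin r → ℝ, S.mulVec (B.mulVec v - b) = (S * Ut).mulVec (y v) := by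
    intro v; rw [key2 v, Matrix.mulVec_mulVec]
  have hσmin : 0 < sigmaMin (S * Ut) := sigmaMin_pos (Nat.succ_pos r) hSU
  have chain : sigmaMin (S * Ut) * enorm2 (y chat) ≤ sigmaMax (S * Ut) * enorm2 (y c) := by
    calc sigmaMin (S * Ut) * enorm2 (y chat) ≤ enorm2 ((S * Ut).mulVec (y chat)) :=
          sigmaMin_mul_le_mulVec _ _
      _ = enorm2 (S.mulVec (B.mulVec chat - b)) := by rw [keyS]
      _ ≤ enorm2 (S.mulVec (B.mulVec c - b)) := hchat c
      _ = enorm2 ((S * Ut).mulVec (y c)) := by rw [keyS]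
      _ ≤ sigmaMax (S * Ut) * enorm2 (y c) := mulVec_le_sigmaMax _ _
  rw [keynorm chat, keynorm c, div_mul_eq_mul_div, le_div_iff₀ hσmin]
  calc enorm2 (y chat) * sigmaMin (S * Ut) = sigmaMin (S * Ut) * enorm2 (y chat) :=
        mul_comm _ _
    _ ≤ sigmaMax (S * Ut) * enorm2 (y c) := chain
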